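/- Let n and t be positive integers with t ≥ 1. The number of set-valued standard tableaux of shape (e+t,e)/(t,0), for some non-negative integer e, with a total of n entries, equals 2·C(2n-3, n-2) − C(2n-2, n-2t-2). -/

import Mathlib

/-- The cells of the two-rowed skew shape `(e+t,e)/(f,0)`, rows indexed by `0` (first
row) and `1` (second row), columns `1`-indexed: the first row has cells in columns
`f+1,…,e+t`, the second row in columns `1,…,e`. -/
def InShape (e t f : ℕ) (p : ℕ × ℕ) : Prop :=
  (p.1 = 0 ∧ f + 1 ≤ p.2 ∧ p.2 ≤ e + t) ∨ (p.1 = 1 ∧ 1 ≤ p.2 ∧ p.2 ≤ e)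

/-- `T` is a set-valued standard tableau of shape `(e+t,e)/(f,0)` with entries
`1,…,n`: each cell of the shape gets a nonempty set, the sets partition `{1,…,n}`,
and every number in a cell is less than all numbers in cells weakly to the right and
weakly below (the cell itself excluded). -/
def IsSVT (n e t f : ℕ) (T : ℕ × ℕ → Finset ℕ) : Prop :=
  (∀ p, ¬ InShape e t f p → T p = ∅) ∧
  (∀ p, InShape e t f p → (T p).Nonempty) ∧
  (∀ p, ∀ k ∈ T p, k ∈ Finset.Icc 1 n) ∧
  (∀ k ∈ Finset.Icc 1 n, ∃! p : ℕ × ℕ, k ∈ T p) ∧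
  (∀ p q : ℕ × ℕ, InShape e t f p → InShape e t f q → p ≠ q → p.1 ≤ q.1 → p.2 ≤ q.2 →
    ∀ a ∈ T p, ∀ b ∈ T q, a < b)

/-- The number of entries of `T` in row `r`, for a two-rowed tableau with at most
`m` columns. -/
def rowEntries (m r : ℕ) (T : ℕ × ℕ → Finset ℕ) : ℕ :=
  ∑ j ∈ Finset.range (m + 1), (T (r, j)).card

/-- Binomial coefficient `C(a,b)` for integers `a`, `b`, with the convention that it
vanishes when `b < 0` or `b > a`. -/
def zchoose (a b : ℤ) : ℤ :=
  if 0 ≤ b ∧ b ≤ a then (a.toNat).choose b.toNat else 0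

lemma zchoose_coe (a b : ℕ) : zchoose a b = (a.choose b : ℤ) := by
  unfold zchoose
  by_cases h : (b:ℤ) ≤ (a:ℤ)
  · simp [h, Int.toNat_natCast]
  · rw [if_neg (by omega)]
    have : a < b := by omega
    rw [Nat.choose_eq_zero_of_lt this]
    simp

lemma zchoose_neg {a b : ℤ} (h : b < 0) : zchoose a b = 0 := by
  unfold zchoose; rw [if_neg (by omega)]

lemma zchoose_big {a b : ℤ} (h : a < b) : zchoose a b = 0 := by
  unfold zchoose; rw [if_neg (by omega)]

lemma zchoose_pascal (a b : ℤ) (h : 0 ≤ a) :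
    zchoose (a + 1) b = zchoose a b + zchoose a (b - 1) := by
  rcases lt_or_ge b 0 with hb | hb
  · rw [zchoose_neg hb, zchoose_neg hb, zchoose_neg (by omega)]; ring
  · obtain ⟨n, rfl⟩ := Int.eq_ofNat_of_zero_le h
    obtain ⟨k, rfl⟩ := Int.eq_ofNat_of_zero_le hb
    rcases k with _ | k
    · have e1 := zchoose_coe (n+1) 0
      have e2 := zchoose_coe n 0
      push_cast at e1 e2
      simp only [Nat.cast_zero]
      rw [zchoose_neg (by norm_num : (0:ℤ) - 1 < 0), e1, e2]
      simp
    · rw [show ((n:ℤ) + 1) = ((n+1 : ℕ) : ℤ) by push_cast; ring,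
        show ((k+1 : ℕ) : ℤ) - 1 = ((k : ℕ) : ℤ) by push_cast; ring,
        zchoose_coe, zchoose_coe, zchoose_coe]
      rw [Nat.choose_succ_succ]
      push_cast; ring

lemma zchoose_symm (a b : ℤ) (h : 0 ≤ a) : zchoose a b = zchoose a (a - b) := by
  rcases lt_or_ge b 0 with hb | hb
  · rw [zchoose_neg hb, zchoose_big (by omega)]
  · rcases le_or_gt b a with hba | hba
    · obtain ⟨n, rfl⟩ := Int.eq_ofNat_of_zero_le h
      obtain ⟨k, rfl⟩ := Int.eq_ofNat_of_zero_le hb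
      have hk : k ≤ n := by exact_mod_cast hba
      rw [show ((n:ℤ) - (k:ℤ)) = ((n - k : ℕ) : ℤ) by push_cast [hk]; ring,
        zchoose_coe, zchoose_coe, Nat.choose_symm hk]
    · rw [zchoose_big hba, zchoose_neg (by omega)]

lemma zchoose_pascal2 (a b : ℤ) (h : 0 ≤ a) :
    zchoose (a + 2) b = zchoose a b + 2 * zchoose a (b - 1) + zchoose a (b - 2) := by
  have h1 := zchoose_pascal (a+1) b (by omega)
  have h2 := zchoose_pascal a b h
  have h3 := zchoose_pascal a (b-1) h
  rw [show a + 1 + 1 = a + 2 by ring] at h1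
  rw [show b - 1 - 1 = b - 2 by ring] at h3
  rw [h1, h2, h3]; ring

lemma zchoose_zero_row (y : ℤ) : zchoose 0 y = if y = 0 then 1 else 0 := by
  unfold zchoose
  by_cases h : y = 0
  · subst h; simp
  · rw [if_neg (by omega), if_neg h]

lemma zchoose_neg_row {a : ℤ} (h : a < 0) (y : ℤ) : zchoose a y = 0 := by
  unfold zchoose; rw [if_neg (by omega)]

def cnt (t : ℕ) : ℕ → ℕ → ℕ → ℕ
  | 0, a, b => if a = b then 1 else 0
  | m+1, a, b =>
      (if b ≤ a + t then cnt t m (a+1) b else 0) +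
      ((if 1 ≤ a ∧ b + 1 ≤ a + t then cnt t m a b else 0) +
      (cnt t m a (b+1) +
      (if 1 ≤ b then cnt t m a b else 0)))

def phiF (t m : ℕ) (x : ℤ) : ℤ :=
  zchoose (2*(m:ℤ)) ((m:ℤ) + x) - zchoose (2*(m:ℤ)) ((m:ℤ) + x - 2*(t:ℤ) - 1)
def phiH (t m a : ℕ) : ℤ :=
  zchoose (2*(m:ℤ) - 1) ((m:ℤ) - a) - zchoose (2*(m:ℤ) - 1) ((m:ℤ) - a - 2*(t:ℤ) - 1)
def phiK (t m b : ℕ) : ℤ :=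
  zchoose (2*(m:ℤ) - 1) ((m:ℤ) - b) - zchoose (2*(m:ℤ) - 1) ((m:ℤ) - 2*(t:ℤ) - 2 + b)

theorem cnt_closed (t : ℕ) (ht : 1 ≤ t) : ∀ m a b : ℕ,
    (1 ≤ a → 1 ≤ b →
      (cnt t m a b : ℤ) = if b ≤ a + t then phiF t m ((b:ℤ) - a) else 0)
    ∧ (1 ≤ a → (cnt t m a 0 : ℤ) = phiH t m a)
    ∧ (1 ≤ b → (cnt t m 0 b : ℤ) = if b ≤ t + 1 then phiK t m b else 0) := by
  intro m
  induction m with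
  | zero =>
    intro a b
    refine ⟨?_, ?_, ?_⟩
    · intro ha hb
      simp only [cnt, phiF]
      by_cases hab : b ≤ a + t
      · rw [if_pos hab]
        push_cast
        norm_num
        rw [zchoose_zero_row, zchoose_zero_row]
        split_ifs <;> push_cast <;> omega
      · rw [if_neg hab, if_neg (by omega : ¬ a = b)]; norm_num
    · intro ha
      simp only [cnt, phiH]
      rw [if_neg (by omega : ¬ a = 0)]
      have z1 : zchoose (2*((0:ℕ):ℤ)-1) (((0:ℕ):ℤ) - (a:ℤ)) = 0 :=
        zchoose_neg_row (by push_cast; try norm_num) _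
      have z2 : zchoose (2*((0:ℕ):ℤ)-1) (((0:ℕ):ℤ) - (a:ℤ) - 2*(t:ℤ) - 1) = 0 :=
        zchoose_neg_row (by push_cast; try norm_num) _
      rw [z1, z2]; norm_num
    · intro hb
      simp only [cnt, phiK]
      rw [if_neg (by omega)]
      have z1 : zchoose (2*((0:ℕ):ℤ) - 1) (((0:ℕ):ℤ) - (b:ℤ)) = 0 :=
        zchoose_neg_row (by push_cast; try norm_num) _
      have z2 : zchoose (2*((0:ℕ):ℤ) - 1) (((0:ℕ):ℤ) - 2*(t:ℤ) - 2 + (b:ℤ)) = 0 :=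
        zchoose_neg_row (by push_cast; try norm_num) _
      rw [z1, z2]
      by_cases h : b ≤ t + 1 <;> simp [h]
  | succ m IH =>
    intro a b
    refine ⟨?_, ?_, ?_⟩
    · -- F region
      intro ha hb
      simp only [cnt]
      rcases Nat.lt_trichotomy (b+1) (a+t+1) with h1 | h1 | h1
      · -- b + 1 ≤ a + t
        rw [if_pos (by omega : b ≤ a + t), if_pos ⟨ha, by omega⟩, if_pos hb,
          if_pos (by omega : b ≤ a + t)]
        have e1 := ((IH (a+1) b).1 (by omega) hb)
        rw [if_pos (by omega : b ≤ (a+1) + t)] at e1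
        have e2 := ((IH a b).1 ha hb)
        rw [if_pos (by omega : b ≤ a + t)] at e2
        have e3 := ((IH a (b+1)).1 ha (by omega))
        rw [if_pos (by omega : b + 1 ≤ a + t)] at e3
        push_cast
        rw [e1, e2, e3]
        simp only [phiF]
        have P1 := zchoose_pascal2 (2*(m:ℤ)) ((m:ℤ)+1+((b:ℤ)-a)) (by positivity)
        have P2 := zchoose_pascal2 (2*(m:ℤ)) ((m:ℤ)+1+((b:ℤ)-a)-2*(t:ℤ)-1) (by positivity)
        push_cast
        ring_nf at P1 P2 ⊢
        linarith [P1, P2]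
      · -- b = a + t
        have hbt : b = a + t := by omega
        rw [if_pos (by omega : b ≤ a + t), if_neg (by omega), if_pos hb,
          if_pos (by omega : b ≤ a + t)]
        have e1 := ((IH (a+1) b).1 (by omega) hb)
        rw [if_pos (by omega : b ≤ (a+1) + t)] at e1
        have e2 := ((IH a b).1 ha hb)
        rw [if_pos (by omega : b ≤ a + t)] at e2
        have e3 := ((IH a (b+1)).1 ha (by omega))
        rw [if_neg (by omega : ¬ (b + 1 ≤ a + t))] at e3
        push_cast
        rw [e1, e2, e3]
        simp only [phiF]
        have P1 := zchoose_pascal2 (2*(m:ℤ)) ((m:ℤ)+1+((b:ℤ)-a)) (by positivity)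
        have P2 := zchoose_pascal2 (2*(m:ℤ)) ((m:ℤ)+1+((b:ℤ)-a)-2*(t:ℤ)-1) (by positivity)
        have S1 := zchoose_symm (2*(m:ℤ)) ((m:ℤ) + ((b:ℤ)-a) - 2*(t:ℤ) - 1) (by positivity)
        have S2 := zchoose_symm (2*(m:ℤ)) ((m:ℤ) + ((b:ℤ)-a) - 2*(t:ℤ)) (by positivity)
        have hbz : (b:ℤ) = (a:ℤ) + t := by exact_mod_cast hbt
        rw [hbz] at P1 P2 S1 S2 ⊢
        push_cast
        ring_nf at P1 P2 S1 S2 ⊢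
        linarith [P1, P2, S1, S2]
      · -- b > a + t
        rw [if_neg (by omega : ¬ (b ≤ a + t)), if_neg (by omega), if_pos hb,
          if_neg (by omega : ¬ (b ≤ a + t))]
        have e2 := ((IH a b).1 ha hb)
        rw [if_neg (by omega : ¬ (b ≤ a + t))] at e2
        have e3 := ((IH a (b+1)).1 ha (by omega))
        rw [if_neg (by omega : ¬ (b + 1 ≤ a + t))] at e3
        push_cast
        rw [e2, e3]
        ring
    · -- H region
      intro ha
      simp only [cnt]
      rw [if_pos (by omega : (0:ℕ) ≤ a + t), if_pos ⟨ha, by omega⟩,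
        if_neg (by omega : ¬ (1:ℕ) ≤ 0)]
      rcases Nat.eq_zero_or_pos m with hm | hm
      · subst hm
        have c1 : cnt t 0 (a+1) 0 = 0 := by
          simp only [cnt]; rw [if_neg (by omega)]
        have c2 : cnt t 0 a 0 = 0 := by
          simp only [cnt]; rw [if_neg (by omega)]
        have c3 : cnt t 0 a 1 = if a = 1 then 1 else 0 := by simp only [cnt]
        rw [c1, c2, c3]
        simp only [phiH]
        have ha' : (1:ℤ) ≤ (a:ℤ) := by exact_mod_cast ha
        have ht' : (1:ℤ) ≤ (t:ℤ) := by exact_mod_cast ht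
        have z2 : zchoose (2*((1:ℕ):ℤ) - 1) (((1:ℕ):ℤ) - (a:ℤ) - 2*(t:ℤ) - 1) = 0 :=
          zchoose_neg (by push_cast; omega)
        rw [z2]
        by_cases h : a = 1
        · subst h
          have z1 : zchoose (2*((1:ℕ):ℤ) - 1) (((1:ℕ):ℤ) - ((1:ℕ):ℤ)) = 1 := by
            have := zchoose_coe 1 0
            push_cast at this ⊢
            norm_num
            rw [this]; norm_num
          rw [if_pos rfl, z1]; norm_num
        · have z1 : zchoose (2*((1:ℕ):ℤ) - 1) (((1:ℕ):ℤ) - (a:ℤ)) = 0 :=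
            zchoose_neg (by push_cast; omega)
          rw [if_neg h, z1]; norm_num
      · have e1 := ((IH (a+1) 0).2.1 (by omega))
        have e2 := ((IH a 0).2.1 ha)
        have e3 := ((IH a 1).1 ha (le_refl 1))
        rw [if_pos (by omega : 1 ≤ a + t)] at e3
        push_cast
        rw [e1, e2, e3]
        simp only [phiH, phiF]
        have h2m : (0:ℤ) ≤ 2*(m:ℤ) - 1 := by
          have : (1:ℤ) ≤ (m:ℤ) := by exact_mod_cast hm
          omega
        have P1 := zchoose_pascal2 (2*(m:ℤ)-1) ((m:ℤ)+1-(a:ℤ)) h2m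
        have P2 := zchoose_pascal2 (2*(m:ℤ)-1) ((m:ℤ)+1-(a:ℤ)-2*(t:ℤ)-1) h2m
        have Q1 := zchoose_pascal (2*(m:ℤ)-1) ((m:ℤ)+1-(a:ℤ)) h2m
        have Q2 := zchoose_pascal (2*(m:ℤ)-1) ((m:ℤ)+1-(a:ℤ)-2*(t:ℤ)-1) h2m
        have R1 : (2*(m:ℤ)-1) + 2 = 2*((m:ℤ)+1) - 1 := by ring
        have R2 : (2*(m:ℤ)-1) + 1 = 2*(m:ℤ) := by ring
        rw [R1] at P1 P2
        rw [R2] at Q1 Q2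
        push_cast
        ring_nf at P1 P2 Q1 Q2 ⊢
        linarith [P1, P2, Q1, Q2]
    · -- K region
      intro hb
      simp only [cnt]
      rw [if_neg (by simp : ¬ (1 ≤ 0 ∧ b + 1 ≤ 0 + t)), if_pos hb]
      rcases Nat.lt_trichotomy b (t+1) with h1 | h1 | h1
      · -- b ≤ t
        rw [if_pos (by omega : b ≤ 0 + t), if_pos (by omega : b ≤ t + 1)]
        rcases Nat.eq_zero_or_pos m with hm | hm
        · subst hm
          have c1 : cnt t 0 1 b = if b = 1 then 1 else 0 := by
            simp only [cnt]
            by_cases h : b = 1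
            · rw [if_pos (by omega), if_pos h]
            · rw [if_neg (by omega), if_neg h]
          have c2 : cnt t 0 0 (b+1) = 0 := by
            simp only [cnt]; rw [if_neg (by omega)]
          have c3 : cnt t 0 0 b = 0 := by
            simp only [cnt]; rw [if_neg (by omega)]
          rw [c1, c2, c3]
          simp only [phiK]
          have hb' : (1:ℤ) ≤ (b:ℤ) := by exact_mod_cast hb
          have ht' : (b:ℤ) ≤ (t:ℤ) := by exact_mod_cast (by omega : b ≤ t)
          have z2 : zchoose (2*((1:ℕ):ℤ) - 1) (((1:ℕ):ℤ) - 2*(t:ℤ) - 2 + (b:ℤ)) = 0 :=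
            zchoose_neg (by push_cast; omega)
          rw [z2]
          by_cases h : b = 1
          · subst h
            have z1 : zchoose (2*((1:ℕ):ℤ) - 1) (((1:ℕ):ℤ) - ((1:ℕ):ℤ)) = 1 := by
              have := zchoose_coe 1 0
              push_cast at this ⊢
              norm_num
              rw [this]; norm_num
            rw [if_pos rfl]
            push_cast at z1 ⊢
            rw [z1]; norm_num
          · have z1 : zchoose (2*((1:ℕ):ℤ) - 1) (((1:ℕ):ℤ) - (b:ℤ)) = 0 :=
              zchoose_neg (by push_cast; omega)
            rw [if_neg h, z1]; norm_num
        · have e1 := ((IH 1 b).1 (le_refl 1) hb)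
          rw [if_pos (by omega : b ≤ 1 + t)] at e1
          have e3 := ((IH 0 (b+1)).2.2 (by omega))
          rw [if_pos (by omega : b + 1 ≤ t + 1)] at e3
          have e4 := ((IH 0 b).2.2 hb)
          rw [if_pos (by omega : b ≤ t + 1)] at e4
          push_cast
          rw [e1, e3, e4]
          simp only [phiK, phiF]
          have h2m : (0:ℤ) ≤ 2*(m:ℤ) - 1 := by
            have : (1:ℤ) ≤ (m:ℤ) := by exact_mod_cast hm
            omega
          have P1 := zchoose_pascal2 (2*(m:ℤ)-1) ((m:ℤ)+1-(b:ℤ)) h2m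
          have P2 := zchoose_pascal2 (2*(m:ℤ)-1) ((m:ℤ)+1-2*(t:ℤ)-2+(b:ℤ)) h2m
          have Q1 := zchoose_pascal (2*(m:ℤ)-1) ((m:ℤ)+(b:ℤ)-1) h2m
          have Q2 := zchoose_pascal (2*(m:ℤ)-1) ((m:ℤ)+(b:ℤ)-2*(t:ℤ)-2) h2m
          have S1 := zchoose_symm (2*(m:ℤ)-1) ((m:ℤ)+(b:ℤ)-1) h2m
          have S2 := zchoose_symm (2*(m:ℤ)-1) ((m:ℤ)+(b:ℤ)-2) h2m
          have R1 : (2*(m:ℤ)-1) + 2 = 2*((m:ℤ)+1) - 1 := by ring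
          have R2 : (2*(m:ℤ)-1) + 1 = 2*(m:ℤ) := by ring
          rw [R1] at P1 P2
          rw [R2] at Q1 Q2
          push_cast
          ring_nf at P1 P2 Q1 Q2 S1 S2 ⊢
          linarith [P1, P2, Q1, Q2, S1, S2]
      · -- b = t + 1
        rw [if_neg (by omega : ¬ b ≤ 0 + t), if_pos (by omega : b ≤ t + 1)]
        have e3 := ((IH 0 (b+1)).2.2 (by omega))
        rw [if_neg (by omega : ¬ b + 1 ≤ t + 1)] at e3
        have e4 := ((IH 0 b).2.2 hb)
        rw [if_pos (by omega : b ≤ t + 1)] at e4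
        push_cast
        rw [e3, e4]
        simp only [phiK]
        have hbz : (b:ℤ) = (t:ℤ) + 1 := by exact_mod_cast h1
        rw [hbz]
        push_cast
        ring_nf
      · -- b > t + 1
        rw [if_neg (by omega : ¬ b ≤ 0 + t), if_neg (by omega : ¬ b ≤ t + 1)]
        have e3 := ((IH 0 (b+1)).2.2 (by omega))
        rw [if_neg (by omega : ¬ b + 1 ≤ t + 1)] at e3
        have e4 := ((IH 0 b).2.2 hb)
        rw [if_neg (by omega : ¬ b ≤ t + 1)] at e4
        push_cast
        rw [e3, e4]
        ring

abbrev Ltr := Bool × Bool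

def cntNew (r : Bool) {m : ℕ} (w : Fin m → Ltr) (k : ℕ) : ℕ :=
  (Finset.univ.filter fun i : Fin m => i.val < k ∧ w i = (r, true)).card

def okc (t a b : ℕ) (l : Ltr) : Bool :=
  if l.1 then (if l.2 then true else decide (1 ≤ b))
  else (if l.2 then decide (b ≤ a + t) else decide (1 ≤ a ∧ b + 1 ≤ a + t))

def Ok (t : ℕ) {m : ℕ} (a b : ℕ) (w : Fin m → Ltr) : Prop :=
  (a + cntNew false w m = b + cntNew true w m) ∧
  ∀ i : Fin m, okc t (a + cntNew false w i.val) (b + cntNew true w i.val) (w i) = true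

instance okDec (t : ℕ) {m : ℕ} (a b : ℕ) (w : Fin m → Ltr) : Decidable (Ok t a b w) := by
  unfold Ok; infer_instance

lemma cntNew_zero (r : Bool) {m : ℕ} (w : Fin m → Ltr) : cntNew r w 0 = 0 := by
  simp [cntNew]

lemma cntNew_cons (r : Bool) {m : ℕ} (l : Ltr) (w : Fin m → Ltr) (k : ℕ) :
    cntNew r (Fin.cons l w) (k+1) = (if l = (r, true) then 1 else 0) + cntNew r w k := by
  simp only [cntNew, Finset.card_filter, Fin.sum_univ_succ, Fin.cons_zero, Fin.cons_succ,
    Fin.val_succ, Fin.val_zero, Nat.succ_lt_succ_iff]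
  simp [Nat.zero_lt_succ]

lemma cntNew_mono (r : Bool) {m : ℕ} (w : Fin m → Ltr) {k k' : ℕ} (h : k ≤ k') :
    cntNew r w k ≤ cntNew r w k' := by
  apply Finset.card_le_card
  intro i hi
  simp only [Finset.mem_filter] at hi ⊢
  exact ⟨hi.1, by omega, hi.2.2⟩

lemma ok_cons {t : ℕ} {m : ℕ} {a b : ℕ} (l : Ltr) (w : Fin m → Ltr) :
    Ok t a b (Fin.cons l w) ↔ (okc t a b l = true ∧
      Ok t (a + (if l = (false, true) then 1 else 0))
           (b + (if l = (true, true) then 1 else 0)) w) := by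
  unfold Ok
  rw [Fin.forall_fin_succ]
  simp only [cntNew_cons, Fin.cons_zero, Fin.cons_succ, Fin.val_succ, Fin.val_zero,
    cntNew_zero, Nat.add_zero, Nat.add_assoc]
  tauto

lemma card_and_const {α : Type*} [Fintype α] (p : Prop) [Decidable p] (q : α → Prop)
    [DecidablePred q] :
    Fintype.card {x : α // p ∧ q x} = if p then Fintype.card {x : α // q x} else 0 := by
  by_cases hp : p
  · rw [if_pos hp]
    exact Fintype.card_congr (Equiv.subtypeEquivRight (fun x => by simp [hp]))
  · rw [if_neg hp]
    have : IsEmpty {x : α // p ∧ q x} := ⟨fun x => hp x.2.1⟩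
    exact Fintype.card_eq_zero

theorem card_ok (t : ℕ) : ∀ (m a b : ℕ),
    Fintype.card {w : Fin m → Ltr // Ok t a b w} = cnt t m a b := by
  intro m
  induction m with
  | zero =>
    intro a b
    simp only [cnt]
    have hiff : ∀ w : Fin 0 → Ltr, Ok t a b w ↔ a = b := by
      intro w
      unfold Ok
      simp [cntNew_zero]
    rw [Fintype.card_congr (Equiv.subtypeEquivRight hiff)]
    by_cases h : a = b
    · rw [if_pos h]
      rw [Fintype.card_eq_one_iff]
      refine ⟨⟨fun i => i.elim0, h⟩, ?_⟩
      rintro ⟨w, hw⟩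
      apply Subtype.ext
      funext i
      exact i.elim0
    · rw [if_neg h]
      have : IsEmpty {w : Fin 0 → Ltr // a = b} := ⟨fun x => h x.2⟩
      exact Fintype.card_eq_zero
  | succ m IH =>
    intro a b
    have E0 : {w : Fin (m+1) → Ltr // Ok t a b w} ≃
        {p : Ltr × (Fin m → Ltr) // Ok t a b (Fin.cons p.1 p.2)} :=
      ((Fin.consEquiv (fun _ => Ltr)).subtypeEquiv (fun p => Iff.rfl)).symm
    have E1 : {p : Ltr × (Fin m → Ltr) // Ok t a b (Fin.cons p.1 p.2)} ≃
        Σ l : Ltr, {w : Fin m → Ltr // Ok t a b (Fin.cons l w)} :=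
      Equiv.subtypeProdEquivSigmaSubtype (fun l w => Ok t a b (Fin.cons l w))
    rw [Fintype.card_congr (E0.trans E1), Fintype.card_sigma]
    have key : ∀ l : Ltr, Fintype.card {w : Fin m → Ltr // Ok t a b (Fin.cons l w)} =
        if okc t a b l = true then
          cnt t m (a + (if l = (false, true) then 1 else 0))
                  (b + (if l = (true, true) then 1 else 0)) else 0 := by
      intro l
      rw [Fintype.card_congr (Equiv.subtypeEquivRight (fun w => ok_cons l w))]
      rw [card_and_const]
      rw [IH]
    rw [Fintype.sum_prod_type]
    simp only [Fintype.sum_bool, key]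
    simp only [okc, cnt]
    norm_num
    split_ifs <;> ring

def Wext {n : ℕ} (w : Fin n → Ltr) (j : ℕ) : Ltr :=
  if h : j < n then w ⟨j, h⟩ else (true, true)

lemma Wext_lt {n : ℕ} (w : Fin n → Ltr) {j : ℕ} (h : j < n) : Wext w j = w ⟨j, h⟩ :=
  dif_pos h

def TW (n t : ℕ) (w : Fin n → Ltr) (p : ℕ × ℕ) : Finset ℕ :=
  (Finset.Icc 1 n).filter fun k =>
    (p.1 = 0 ∧ (Wext w (k-1)).1 = false ∧ p.2 = t + cntNew false w k) ∨
    (p.1 = 1 ∧ (Wext w (k-1)).1 = true ∧ p.2 = cntNew true w k)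

/-- cell of entry `k` according to a word. -/
def cellW (n t : ℕ) (w : Fin n → Ltr) (k : ℕ) : ℕ × ℕ :=
  if (Wext w (k-1)).1 = false then (0, t + cntNew false w k) else (1, cntNew true w k)

lemma mem_TW_iff {n t : ℕ} {w : Fin n → Ltr} {p : ℕ × ℕ} {k : ℕ} :
    k ∈ TW n t w p ↔ (k ∈ Finset.Icc 1 n ∧ p = cellW n t w k) := by
  unfold TW cellW
  rw [Finset.mem_filter]
  constructor
  · rintro ⟨hk, h | h⟩
    · refine ⟨hk, ?_⟩
      rw [if_pos h.2.1]
      exact Prod.ext h.1 h.2.2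
    · refine ⟨hk, ?_⟩
      rw [if_neg (by simp [h.2.1])]
      exact Prod.ext h.1 h.2.2
  · rintro ⟨hk, rfl⟩
    refine ⟨hk, ?_⟩
    by_cases h : (Wext w (k-1)).1 = false
    · left; rw [if_pos h]; exact ⟨rfl, h, rfl⟩
    · right; rw [if_neg h]
      exact ⟨rfl, by simp at h; exact h, rfl⟩

lemma cntNew_succ (r : Bool) {m : ℕ} (w : Fin m → Ltr) {k : ℕ} (h : k < m) :
    cntNew r w (k+1) = cntNew r w k + (if w ⟨k, h⟩ = (r, true) then 1 else 0) := by
  unfold cntNew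
  have hsplit : (Finset.univ.filter fun i : Fin m => i.val < k + 1 ∧ w i = (r, true))
      = (Finset.univ.filter fun i : Fin m => i.val < k ∧ w i = (r, true)) ∪
        (Finset.univ.filter fun i : Fin m => i.val = k ∧ w i = (r, true)) := by
    rw [← Finset.filter_or]
    apply Finset.filter_congr
    intro i _
    constructor
    · rintro ⟨h1, h2⟩
      rcases Nat.lt_succ_iff_lt_or_eq.mp h1 with h1 | h1
      · exact Or.inl ⟨h1, h2⟩
      · exact Or.inr ⟨h1, h2⟩
    · rintro (⟨h1, h2⟩ | ⟨h1, h2⟩)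
      · exact ⟨by omega, h2⟩
      · exact ⟨by omega, h2⟩
  rw [hsplit, Finset.card_union_of_disjoint]
  · congr 1
    by_cases hc : w ⟨k, h⟩ = (r, true)
    · rw [if_pos hc]
      rw [Finset.card_eq_one]
      refine ⟨⟨k, h⟩, ?_⟩
      ext i
      simp only [Finset.mem_filter, Finset.mem_univ, true_and, Finset.mem_singleton]
      constructor
      · rintro ⟨h1, _⟩; exact Fin.ext h1
      · rintro rfl; exact ⟨rfl, hc⟩
    · rw [if_neg hc]
      rw [Finset.card_eq_zero]
      ext i
      simp only [Finset.mem_filter, Finset.mem_univ, true_and, Finset.notMem_empty,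
        iff_false, not_and]
      intro h1
      have : i = ⟨k, h⟩ := Fin.ext h1
      rw [this]; exact hc
  · rw [Finset.disjoint_left]
    intro i hi hi'
    simp only [Finset.mem_filter] at hi hi'
    omega

lemma cntNew_lt_imp_lt (r : Bool) {m : ℕ} (w : Fin m → Ltr) {x y : ℕ}
    (h : cntNew r w x < cntNew r w y) : x < y := by
  by_contra hc
  exact absurd (cntNew_mono r w (by omega : y ≤ x)) (by omega)

/-- the counter hits every intermediate value at a "new" position -/
lemma cntNew_hit (r : Bool) {m : ℕ} (w : Fin m → Ltr) :
    ∀ K, K ≤ m → ∀ j, 1 ≤ j → j ≤ cntNew r w K →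
    ∃ k, ∃ h : k - 1 < m, 1 ≤ k ∧ k ≤ K ∧ w ⟨k-1, h⟩ = (r, true) ∧ cntNew r w k = j := by
  intro K
  induction K with
  | zero =>
    intro _ j hj1 hj2
    rw [cntNew_zero] at hj2; omega
  | succ K IH =>
    intro hKm j hj1 hj2
    have hK : K < m := by omega
    rw [cntNew_succ r w hK] at hj2
    by_cases hc : w ⟨K, hK⟩ = (r, true)
    · rw [if_pos hc] at hj2
      by_cases hj : j = cntNew r w K + 1
      · refine ⟨K + 1, by omega, by omega, le_refl _, ?_, ?_⟩
        · exact hc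
        · rw [cntNew_succ r w hK, if_pos hc]; omega
      · obtain ⟨k, hh, h1, h2, h3, h4⟩ := IH (by omega) j hj1 (by omega)
        exact ⟨k, hh, h1, by omega, h3, h4⟩
    · rw [if_neg hc] at hj2
      obtain ⟨k, hh, h1, h2, h3, h4⟩ := IH (by omega) j hj1 (by omega)
      exact ⟨k, hh, h1, by omega, h3, h4⟩

section PerPosition
variable {n t : ℕ} {w : Fin n → Ltr}

lemma end_eq (hw : Ok t 0 0 w) : cntNew false w n = cntNew true w n := by
  have := hw.1; omega

lemma ok_A_pos (hw : Ok t 0 0 w) {k : ℕ} (h1 : 1 ≤ k) (h2 : k ≤ n)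
    (hA : (Wext w (k-1)).1 = false) :
    1 ≤ cntNew false w k ∧ cntNew true w k + 1 ≤ cntNew false w k + t := by
  have hkn : k - 1 < n := by omega
  have hwi : Wext w (k-1) = w ⟨k-1, hkn⟩ := Wext_lt w hkn
  have hok := hw.2 ⟨k-1, hkn⟩
  simp only [zero_add] at hok
  have hsf := cntNew_succ false w hkn
  have hst := cntNew_succ true w hkn
  rw [show k-1+1 = k by omega] at hsf hst
  rw [hwi] at hA
  rcases hv : (w ⟨k-1, hkn⟩).2 with _ | _
  · -- continue letter (false, false)
    have hl : w ⟨k-1, hkn⟩ = (false, false) := Prod.ext hA hv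
    rw [hl] at hok
    simp [okc] at hok
    rw [hsf, hst, hl]
    simp
    omega
  · -- new letter (false, true)
    have hl : w ⟨k-1, hkn⟩ = (false, true) := Prod.ext hA hv
    rw [hl] at hok
    simp [okc] at hok
    rw [hsf, hst, hl]
    simp
    omega

lemma ok_B_pos (hw : Ok t 0 0 w) {k : ℕ} (h1 : 1 ≤ k) (h2 : k ≤ n)
    (hB : (Wext w (k-1)).1 = true) : 1 ≤ cntNew true w k := by
  have hkn : k - 1 < n := by omega
  have hwi : Wext w (k-1) = w ⟨k-1, hkn⟩ := Wext_lt w hkn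
  have hok := hw.2 ⟨k-1, hkn⟩
  simp only [zero_add] at hok
  have hst := cntNew_succ true w hkn
  rw [show k-1+1 = k by omega] at hst
  rw [hwi] at hB
  rcases hv : (w ⟨k-1, hkn⟩).2 with _ | _
  · have hl : w ⟨k-1, hkn⟩ = (true, false) := Prod.ext hB hv
    rw [hl] at hok
    simp [okc] at hok
    have : cntNew true w (k-1) ≤ cntNew true w k := cntNew_mono _ _ (by omega)
    omega
  · have hl : w ⟨k-1, hkn⟩ = (true, true) := Prod.ext hB hv
    rw [hst, hl]
    simp

lemma shape_cellW (hw : Ok t 0 0 w) {k : ℕ} (h1 : 1 ≤ k) (h2 : k ≤ n) :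
    InShape (cntNew false w n) t t (cellW n t w k) := by
  unfold cellW
  by_cases hA : (Wext w (k-1)).1 = false
  · rw [if_pos hA]
    left
    refine ⟨rfl, ?_, ?_⟩
    · have := (ok_A_pos hw h1 h2 hA).1; omega
    · have := cntNew_mono false w h2; omega
  · rw [if_neg hA]
    right
    simp only [Bool.not_eq_false] at hA
    refine ⟨rfl, ok_B_pos hw h1 h2 hA, ?_⟩
    have := cntNew_mono true w h2
    have := end_eq hw
    omega

theorem isSVT_TW (hw : Ok t 0 0 w) : IsSVT n (cntNew false w n) t t (TW n t w) := by
  refine ⟨?_, ?_, ?_, ?_, ?_⟩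
  · intro p hp
    rw [Finset.eq_empty_iff_forall_notMem]
    intro k hk
    rw [mem_TW_iff] at hk
    obtain ⟨hk1, rfl⟩ := hk
    rw [Finset.mem_Icc] at hk1
    exact hp (shape_cellW hw hk1.1 hk1.2)
  · rintro p (⟨hp0, hc1, hc2⟩ | ⟨hp1, hc1, hc2⟩)
    · obtain ⟨k, hh, hk1, hk2, hk3, hk4⟩ :=
        cntNew_hit false w n le_rfl (p.2 - t) (by omega) (by omega)
      refine ⟨k, mem_TW_iff.mpr ⟨Finset.mem_Icc.mpr ⟨hk1, hk2⟩, ?_⟩⟩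
      unfold cellW
      rw [Wext_lt w hh, hk3]
      rw [if_pos rfl]
      refine Prod.ext hp0 ?_
      simp only
      omega
    · obtain ⟨k, hh, hk1, hk2, hk3, hk4⟩ :=
        cntNew_hit true w n le_rfl p.2 (by omega) (by have := end_eq hw; omega)
      refine ⟨k, mem_TW_iff.mpr ⟨Finset.mem_Icc.mpr ⟨hk1, hk2⟩, ?_⟩⟩
      unfold cellW
      rw [Wext_lt w hh, hk3]
      rw [if_neg (by simp)]
      exact Prod.ext hp1 (by simp only; omega)
  · intro p k hk
    exact Finset.mem_of_mem_filter k hk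
  · intro k hk
    exact ⟨cellW n t w k, mem_TW_iff.mpr ⟨hk, rfl⟩, fun q hq => (mem_TW_iff.mp hq).2⟩
  · intro p q hp hq hne hr hc x hx y hy
    rw [mem_TW_iff] at hx hy
    obtain ⟨hx1, rfl⟩ := hx
    obtain ⟨hy1, rfl⟩ := hy
    rw [Finset.mem_Icc] at hx1 hy1
    unfold cellW at hne hr hc
    by_cases bx : (Wext w (x-1)).1 = false <;>
      by_cases byy : (Wext w (y-1)).1 = false
    · rw [if_pos bx, if_pos byy] at hne hr hc
      simp only at hne hr hc
      have hxy : cntNew false w x < cntNew false w y := by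
        rcases Nat.lt_or_ge (cntNew false w x) (cntNew false w y) with h | h
        · exact h
        · exfalso; apply hne
          refine Prod.ext rfl ?_
          simp only
          omega
      exact cntNew_lt_imp_lt false w hxy
    · rw [if_pos bx, if_neg byy] at hne hr hc
      simp only at hne hr hc
      have h1 := (ok_A_pos hw hx1.1 hx1.2 bx).2
      apply cntNew_lt_imp_lt true w
      omega
    · rw [if_neg bx, if_pos byy] at hne hr hc
      simp only at hr
      omega
    · rw [if_neg bx, if_neg byy] at hne hr hc
      simp only at hne hr hc
      have hxy : cntNew true w x < cntNew true w y := by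
        rcases Nat.lt_or_ge (cntNew true w x) (cntNew true w y) with h | h
        · exact h
        · exfalso; apply hne
          refine Prod.ext rfl ?_
          simp only
          omega
      exact cntNew_lt_imp_lt true w hxy

end PerPosition

section Inj
variable {n t : ℕ} {w : Fin n → Ltr}

lemma newbit_iff (hw : Ok t 0 0 w) {k : ℕ} (h1 : 1 ≤ k) (h2 : k ≤ n) :
    (Wext w (k-1)).2 = true ↔ ∀ j ∈ TW n t w (cellW n t w k), k ≤ j := by
  have hkn : k - 1 < n := by omega
  have hwi : Wext w (k-1) = w ⟨k-1, hkn⟩ := Wext_lt w hkn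
  have hsf := cntNew_succ false w hkn
  have hst := cntNew_succ true w hkn
  rw [show k-1+1 = k by omega] at hsf hst
  constructor
  · intro hnew j hj
    rw [mem_TW_iff] at hj
    obtain ⟨hjI, hcell⟩ := hj
    rw [Finset.mem_Icc] at hjI
    by_contra hlt
    push_neg at hlt
    by_cases bk : (Wext w (k-1)).1 = false
    · have hl : w ⟨k-1, hkn⟩ = (false, true) := Prod.ext (hwi ▸ bk) (hwi ▸ hnew)
      have hak : cntNew false w k = cntNew false w (k-1) + 1 := by
        rw [hsf, hl, if_pos rfl]
      -- cellW j = cellW k forces row of j = 0 and α j = α k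
      unfold cellW at hcell
      rw [if_pos bk] at hcell
      by_cases bj : (Wext w (j-1)).1 = false
      · rw [if_pos bj] at hcell
        have haj : cntNew false w j = cntNew false w k := by
          have := congrArg Prod.snd hcell
          simp at this
          omega
        have : cntNew false w j ≤ cntNew false w (k-1) :=
          cntNew_mono false w (by omega)
        omega
      · rw [if_neg bj] at hcell
        have := congrArg Prod.fst hcell
        simp at this
    · simp only [Bool.not_eq_false] at bk
      have hl : w ⟨k-1, hkn⟩ = (true, true) := Prod.ext (hwi ▸ bk) (hwi ▸ hnew)
      have hak : cntNew true w k = cntNew true w (k-1) + 1 := by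
        rw [hst, hl, if_pos rfl]
      unfold cellW at hcell
      rw [if_neg (by simp [bk])] at hcell
      by_cases bj : (Wext w (j-1)).1 = false
      · rw [if_pos bj] at hcell
        have := congrArg Prod.fst hcell
        simp at this
      · rw [if_neg bj] at hcell
        have haj : cntNew true w j = cntNew true w k := by
          have := congrArg Prod.snd hcell
          simp at this
          omega
        have : cntNew true w j ≤ cntNew true w (k-1) :=
          cntNew_mono true w (by omega)
        omega
  · intro hmin
    by_contra hnew
    simp only [Bool.not_eq_true] at hnew
    by_cases bk : (Wext w (k-1)).1 = false
    · obtain ⟨k0, hh0, hk01, hk02, hk03, hk04⟩ :=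
        cntNew_hit false w n le_rfl (cntNew false w k)
          ((ok_A_pos hw h1 h2 bk).1) (cntNew_mono false w h2)
      have hne : k0 ≠ k := by
        intro h
        subst h
        have : w ⟨k0-1, hkn⟩ = (false, true) := hk03
        rw [hwi] at hnew
        rw [this] at hnew
        simp at hnew
      have hlt : k0 < k := by
        rcases Nat.lt_or_ge k0 k with h | h
        · exact h
        · exfalso
          have hk0n : k0 - 1 < n := by omega
          have hs0 := cntNew_succ false w hk0n
          rw [show k0-1+1 = k0 by omega] at hs0
          rw [hs0, hk03, if_pos rfl] at hk04
          have : cntNew false w k ≤ cntNew false w (k0 - 1) :=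
            cntNew_mono false w (by omega)
          omega
      have hmem : k0 ∈ TW n t w (cellW n t w k) := by
        rw [mem_TW_iff]
        refine ⟨Finset.mem_Icc.mpr ⟨hk01, hk02⟩, ?_⟩
        unfold cellW
        rw [if_pos bk, Wext_lt w hh0, hk03, if_pos rfl, hk04]
      exact absurd (hmin k0 hmem) (by omega)
    · simp only [Bool.not_eq_false] at bk
      obtain ⟨k0, hh0, hk01, hk02, hk03, hk04⟩ :=
        cntNew_hit true w n le_rfl (cntNew true w k)
          (ok_B_pos hw h1 h2 bk) (cntNew_mono true w h2)
      have hne : k0 ≠ k := by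
        intro h
        subst h
        have : w ⟨k0-1, hkn⟩ = (true, true) := hk03
        rw [hwi] at hnew
        rw [this] at hnew
        simp at hnew
      have hlt : k0 < k := by
        rcases Nat.lt_or_ge k0 k with h | h
        · exact h
        · exfalso
          have hk0n : k0 - 1 < n := by omega
          have hs0 := cntNew_succ true w hk0n
          rw [show k0-1+1 = k0 by omega] at hs0
          rw [hs0, hk03, if_pos rfl] at hk04
          have : cntNew true w k ≤ cntNew true w (k0 - 1) :=
            cntNew_mono true w (by omega)
          omega
      have hmem : k0 ∈ TW n t w (cellW n t w k) := by
        rw [mem_TW_iff]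
        refine ⟨Finset.mem_Icc.mpr ⟨hk01, hk02⟩, ?_⟩
        unfold cellW
        rw [if_neg (by simp [bk]), Wext_lt w hh0, hk03, if_neg (by simp), hk04]
      exact absurd (hmin k0 hmem) (by omega)

theorem TW_inj {w' : Fin n → Ltr} (hw : Ok t 0 0 w) (hw' : Ok t 0 0 w')
    (hT : TW n t w = TW n t w') : w = w' := by
  funext i
  have hkn : (i.val + 1) - 1 < n := by have := i.isLt; omega
  set k := i.val + 1 with hk
  have h1 : 1 ≤ k := by omega
  have h2 : k ≤ n := by have := i.isLt; omega
  have hwi : Wext w (k-1) = w i := by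
    rw [Wext_lt w hkn]; congr 1
  have hwi' : Wext w' (k-1) = w' i := by
    rw [Wext_lt w' hkn]; congr 1
  have hmem : k ∈ TW n t w (cellW n t w k) :=
    mem_TW_iff.mpr ⟨Finset.mem_Icc.mpr ⟨h1, h2⟩, rfl⟩
  rw [hT] at hmem
  have hcell : cellW n t w k = cellW n t w' k := (mem_TW_iff.mp hmem).2
  -- first components equal
  have hfst : (Wext w (k-1)).1 = (Wext w' (k-1)).1 := by
    by_cases b : (Wext w (k-1)).1 = false <;> by_cases b' : (Wext w' (k-1)).1 = false
    · rw [b, b']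
    · exfalso
      unfold cellW at hcell
      rw [if_pos b, if_neg b'] at hcell
      have := congrArg Prod.fst hcell
      simp at this
    · exfalso
      unfold cellW at hcell
      rw [if_neg b, if_pos b'] at hcell
      have := congrArg Prod.fst hcell
      simp at this
    · simp only [Bool.not_eq_false] at b b'
      rw [b, b']
  have hsnd : (Wext w (k-1)).2 = (Wext w' (k-1)).2 := by
    have i1 := newbit_iff hw h1 h2
    have i2 := newbit_iff hw' h1 h2
    rw [← hT, ← hcell] at i2
    rw [← i1] at i2
    rcases hb : (Wext w (k-1)).2 <;> rcases hb' : (Wext w' (k-1)).2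
    · rfl
    · rw [hb, hb'] at i2; simp at i2
    · rw [hb, hb'] at i2; simp at i2
    · rfl
  rw [← hwi, ← hwi']
  exact Prod.ext hfst hsnd

end Inj

section Surj
variable {n t e : ℕ} {T : ℕ × ℕ → Finset ℕ}

noncomputable def cellT (hT : IsSVT n e t t T) (k : ℕ) : ℕ × ℕ :=
  if hk : k ∈ Finset.Icc 1 n then (hT.2.2.2.1 k hk).exists.choose else (2, 0)

lemma mem_cellT (hT : IsSVT n e t t T) {k : ℕ} (hk : k ∈ Finset.Icc 1 n) :
    k ∈ T (cellT hT k) := by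
  unfold cellT; rw [dif_pos hk]; exact (hT.2.2.2.1 k hk).exists.choose_spec

lemma cellT_unique (hT : IsSVT n e t t T) {k : ℕ} {p : ℕ × ℕ}
    (hk : k ∈ Finset.Icc 1 n) (hp : k ∈ T p) : p = cellT hT k :=
  (hT.2.2.2.1 k hk).unique hp (mem_cellT hT hk)

lemma shape_cellT (hT : IsSVT n e t t T) {k : ℕ} (hk : k ∈ Finset.Icc 1 n) :
    InShape e t t (cellT hT k) := by
  by_contra h
  have := mem_cellT hT hk
  rw [hT.1 _ h] at this
  exact Finset.notMem_empty _ this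

lemma cellT_lt (hT : IsSVT n e t t T) {j k : ℕ} (hj : j ∈ Finset.Icc 1 n)
    (hk : k ∈ Finset.Icc 1 n) (h1 : (cellT hT j).1 ≤ (cellT hT k).1)
    (h2 : (cellT hT j).2 ≤ (cellT hT k).2) (hne : cellT hT j ≠ cellT hT k) : j < k :=
  hT.2.2.2.2 _ _ (shape_cellT hT hj) (shape_cellT hT hk) hne h1 h2 j (mem_cellT hT hj)
    k (mem_cellT hT hk)

noncomputable def wT (hT : IsSVT n e t t T) : Fin n → Ltr := fun i =>
  ((cellT hT (i.val+1)).1 == 1,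
   @decide (∀ j ∈ T (cellT hT (i.val+1)), i.val+1 ≤ j) (Classical.propDecidable _))

lemma cellT_fst (hT : IsSVT n e t t T) {k : ℕ} (hk : k ∈ Finset.Icc 1 n) :
    (cellT hT k).1 = 0 ∨ (cellT hT k).1 = 1 := by
  rcases shape_cellT hT hk with ⟨h, _⟩ | ⟨h, _⟩
  · exact Or.inl h
  · exact Or.inr h

lemma wT_eq_iff (hT : IsSVT n e t t T) (r : Bool) (i : Fin n) :
    wT hT i = (r, true) ↔
      ((cellT hT (i.val+1)).1 = cond r 1 0) ∧
        (∀ j ∈ T (cellT hT (i.val+1)), i.val+1 ≤ j) := by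
  have hI : (i.val+1) ∈ Finset.Icc 1 n :=
    Finset.mem_Icc.mpr ⟨by omega, by have := i.isLt; omega⟩
  have hd := cellT_fst hT hI
  unfold wT
  cases r
  · rw [Prod.mk.injEq]
    simp only [decide_eq_true_eq]
    constructor
    · rintro ⟨h1, h2⟩
      refine ⟨?_, h2⟩
      rcases hd with h0 | hone
      · exact h0
      · rw [hone] at h1; simp at h1
    · rintro ⟨h1, h2⟩
      refine ⟨?_, h2⟩
      rw [h1]
      rfl
  · rw [Prod.mk.injEq]
    simp only [decide_eq_true_eq]
    constructor
    · rintro ⟨h1, h2⟩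
      refine ⟨?_, h2⟩
      rcases hd with h0 | hone
      · rw [h0] at h1; simp at h1
      · exact hone
    · rintro ⟨h1, h2⟩
      refine ⟨?_, h2⟩
      rw [h1]
      rfl

/-- The master counting lemma: the number of "new" entries of row `r` among entries
`≤ K` equals the number of columns in `[lo, c₀]`, under an iff hypothesis. -/
lemma count_cols (hT : IsSVT n e t t T) (r : Bool) (K c₀ : ℕ)
    (hiff : ∀ k, 1 ≤ k → k ≤ n → ((cellT hT k).1 = cond r 1 0) →
      (∀ j ∈ T (cellT hT k), k ≤ j) → (k ≤ K ↔ (cellT hT k).2 ≤ c₀))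
    (hshape : ∀ c, (cond r 1 (t+1)) ≤ c → c ≤ c₀ →
      InShape e t t ((cond r 1 0 : ℕ), c)) :
    cntNew r (wT hT) K = (Finset.Icc (cond r 1 (t+1)) c₀).card := by
  unfold cntNew
  apply Finset.card_bij (fun i _ => (cellT hT (i.val+1)).2)
  · -- maps to
    intro i hi
    rw [Finset.mem_filter] at hi
    obtain ⟨-, hiK, hwi⟩ := hi
    rw [wT_eq_iff] at hwi
    obtain ⟨hrow, hmin⟩ := hwi
    have h1 : 1 ≤ i.val + 1 := by omega
    have h2 : i.val + 1 ≤ n := by have := i.isLt; omega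
    have hub := (hiff _ h1 h2 hrow hmin).mp (by omega)
    have hsh := shape_cellT hT (Finset.mem_Icc.mpr ⟨h1, h2⟩)
    rw [Finset.mem_Icc]
    refine ⟨?_, hub⟩
    rcases hsh with ⟨h, hc, _⟩ | ⟨h, hc, _⟩ <;> cases r <;> simp_all
  · -- injective
    intro i1 h1 i2 h2 heq
    rw [Finset.mem_filter] at h1 h2
    obtain ⟨-, -, hw1⟩ := h1
    obtain ⟨-, -, hw2⟩ := h2
    rw [wT_eq_iff] at hw1 hw2
    have hcell : cellT hT (i1.val+1) = cellT hT (i2.val+1) :=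
      Prod.ext (hw1.1.trans hw2.1.symm) heq
    have m12 : i1.val + 1 ≤ i2.val + 1 := by
      apply hw1.2
      rw [hcell]
      exact mem_cellT hT (Finset.mem_Icc.mpr ⟨by omega, by have := i2.isLt; omega⟩)
    have m21 : i2.val + 1 ≤ i1.val + 1 := by
      apply hw2.2
      rw [← hcell]
      exact mem_cellT hT (Finset.mem_Icc.mpr ⟨by omega, by have := i1.isLt; omega⟩)
    exact Fin.ext (by omega)
  · -- surjective
    intro c hc
    rw [Finset.mem_Icc] at hc
    have hq : InShape e t t ((cond r 1 0 : ℕ), c) := hshape c hc.1 hc.2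
    have hne : (T ((cond r 1 0 : ℕ), c)).Nonempty := hT.2.1 _ hq
    set j := (T ((cond r 1 0 : ℕ), c)).min' hne with hj
    have hjq : j ∈ T ((cond r 1 0 : ℕ), c) := Finset.min'_mem _ hne
    have hjI : j ∈ Finset.Icc 1 n := hT.2.2.1 _ j hjq
    have hjI' := Finset.mem_Icc.mp hjI
    have hcell : ((cond r 1 0 : ℕ), c) = cellT hT j := cellT_unique hT hjI hjq
    have hrow : (cellT hT j).1 = cond r 1 0 := by rw [← hcell]
    have hcol : (cellT hT j).2 = c := by rw [← hcell]
    have hmin : ∀ l ∈ T (cellT hT j), j ≤ l := by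
      rw [← hcell]
      exact fun l hl => Finset.min'_le _ l hl
    have hjK : j ≤ K := (hiff j hjI'.1 hjI'.2 hrow hmin).mpr (by omega)
    refine ⟨⟨j-1, by omega⟩, ⟨?_, ?_⟩⟩
    · rw [Finset.mem_filter]
      have hj1 : (j:ℕ) - 1 + 1 = j := by omega
      refine ⟨Finset.mem_univ _, by simp only; omega, ?_⟩
      rw [wT_eq_iff]
      simp only [hj1]
      exact ⟨hrow, hmin⟩
    · simp only
      rw [show (j:ℕ) - 1 + 1 = j by omega, hcol]

lemma count_cols_le (hT : IsSVT n e t t T) (r : Bool) (K c₀ lo : ℕ)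
    (hfwd : ∀ k, 1 ≤ k → k ≤ n → ((cellT hT k).1 = cond r 1 0) →
      (∀ j ∈ T (cellT hT k), k ≤ j) → k ≤ K → lo ≤ (cellT hT k).2 ∧ (cellT hT k).2 ≤ c₀) :
    cntNew r (wT hT) K ≤ (Finset.Icc lo c₀).card := by
  unfold cntNew
  apply Finset.card_le_card_of_injOn (fun i => (cellT hT (i.val+1)).2)
  · intro i hi
    rw [Finset.mem_coe, Finset.mem_filter] at hi
    obtain ⟨-, hiK, hwi⟩ := hi
    rw [wT_eq_iff] at hwi
    have h2 : i.val + 1 ≤ n := by have := i.isLt; omega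
    have := hfwd _ (by omega) h2 hwi.1 hwi.2 (by omega)
    rw [Finset.mem_coe, Finset.mem_Icc]
    exact this
  · intro i1 h1 i2 h2 heq
    simp only [Finset.coe_filter, Set.mem_setOf_eq] at h1 h2
    obtain ⟨-, -, hw1⟩ := h1
    obtain ⟨-, -, hw2⟩ := h2
    rw [wT_eq_iff] at hw1 hw2
    have hcell : cellT hT (i1.val+1) = cellT hT (i2.val+1) :=
      Prod.ext (hw1.1.trans hw2.1.symm) heq
    have m12 : i1.val + 1 ≤ i2.val + 1 := by
      apply hw1.2
      rw [hcell]
      exact mem_cellT hT (Finset.mem_Icc.mpr ⟨by omega, by have := i2.isLt; omega⟩)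
    have m21 : i2.val + 1 ≤ i1.val + 1 := by
      apply hw2.2
      rw [← hcell]
      exact mem_cellT hT (Finset.mem_Icc.mpr ⟨by omega, by have := i1.isLt; omega⟩)
    exact Fin.ext (by omega)

end Surj

section Surj2
variable {n t e : ℕ} {T : ℕ × ℕ → Finset ℕ}

lemma cnt_false_n (hT : IsSVT n e t t T) : cntNew false (wT hT) n = e := by
  have h := count_cols hT false n (e+t) ?_ ?_
  · rw [h, Nat.card_Icc]
    simp only [cond]
    omega
  · intro k h1 h2 hrow hmin
    constructor
    · intro _
      rcases shape_cellT hT (Finset.mem_Icc.mpr ⟨h1, h2⟩) with ⟨hh, _, hub⟩ | ⟨hh, _, hub⟩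
      · exact hub
      · simp only [cond] at hrow; omega
    · intro _; exact h2
  · intro c hc1 hc2
    exact Or.inl ⟨rfl, hc1, hc2⟩

lemma cnt_true_n (hT : IsSVT n e t t T) : cntNew true (wT hT) n = e := by
  have h := count_cols hT true n e ?_ ?_
  · rw [h, Nat.card_Icc]
    simp only [cond]
    omega
  · intro k h1 h2 hrow hmin
    constructor
    · intro _
      rcases shape_cellT hT (Finset.mem_Icc.mpr ⟨h1, h2⟩) with ⟨hh, _, hub⟩ | ⟨hh, _, hub⟩
      · simp only [cond] at hrow; omega
      · exact hub
    · intro _; exact h2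
  · intro c hc1 hc2
    exact Or.inr ⟨rfl, hc1, hc2⟩

lemma colA (hT : IsSVT n e t t T) {k : ℕ} (hkI : k ∈ Finset.Icc 1 n)
    (hrow : (cellT hT k).1 = 0) :
    cntNew false (wT hT) k = (cellT hT k).2 - t := by
  have hkI' := Finset.mem_Icc.mp hkI
  have hsh := shape_cellT hT hkI
  have hcol : t + 1 ≤ (cellT hT k).2 ∧ (cellT hT k).2 ≤ e + t := by
    rcases hsh with ⟨_, h1, h2⟩ | ⟨hh, _, _⟩
    · exact ⟨h1, h2⟩
    · omega
  have h := count_cols hT false k ((cellT hT k).2) ?_ ?_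
  · rw [h, Nat.card_Icc]
    simp only [cond]
    omega
  · intro j h1 h2 hrowj hminj
    have hjI : j ∈ Finset.Icc 1 n := Finset.mem_Icc.mpr ⟨h1, h2⟩
    simp only [cond] at hrowj
    constructor
    · intro hjk
      by_contra hcj
      push_neg at hcj
      have := cellT_lt hT hkI hjI (by omega) (by omega)
        (fun h => by have := congrArg Prod.snd h; omega)
      omega
    · intro hcj
      by_cases hcc : cellT hT j = cellT hT k
      · apply hminj k
        rw [hcc]
        exact mem_cellT hT hkI
      · exact le_of_lt (cellT_lt hT hjI hkI (by omega) hcj hcc)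
  · intro c hc1 hc2
    simp only [cond] at hc1
    exact Or.inl ⟨rfl, hc1, by omega⟩

lemma colB (hT : IsSVT n e t t T) {k : ℕ} (hkI : k ∈ Finset.Icc 1 n)
    (hrow : (cellT hT k).1 = 1) :
    cntNew true (wT hT) k = (cellT hT k).2 := by
  have hkI' := Finset.mem_Icc.mp hkI
  have hsh := shape_cellT hT hkI
  have hcol : 1 ≤ (cellT hT k).2 ∧ (cellT hT k).2 ≤ e := by
    rcases hsh with ⟨hh, _, _⟩ | ⟨_, h1, h2⟩
    · omega
    · exact ⟨h1, h2⟩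
  have h := count_cols hT true k ((cellT hT k).2) ?_ ?_
  · rw [h, Nat.card_Icc]
    simp only [cond]
    omega
  · intro j h1 h2 hrowj hminj
    have hjI : j ∈ Finset.Icc 1 n := Finset.mem_Icc.mpr ⟨h1, h2⟩
    simp only [cond] at hrowj
    constructor
    · intro hjk
      by_contra hcj
      push_neg at hcj
      have := cellT_lt hT hkI hjI (by omega) (by omega)
        (fun h => by have := congrArg Prod.snd h; omega)
      omega
    · intro hcj
      by_cases hcc : cellT hT j = cellT hT k
      · apply hminj k
        rw [hcc]
        exact mem_cellT hT hkI
      · exact le_of_lt (cellT_lt hT hjI hkI (by omega) hcj hcc)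
  · intro c hc1 hc2
    simp only [cond] at hc1
    exact Or.inr ⟨rfl, hc1, by omega⟩

lemma colA_pred (hT : IsSVT n e t t T) {k : ℕ} (hkI : k ∈ Finset.Icc 1 n)
    (hrow : (cellT hT k).1 = 0) :
    cntNew false (wT hT) (k-1) =
      (if ∀ j ∈ T (cellT hT k), k ≤ j then (cellT hT k).2 - t - 1
       else (cellT hT k).2 - t) := by
  have hkI' := Finset.mem_Icc.mp hkI
  have hsh := shape_cellT hT hkI
  have hcol : t + 1 ≤ (cellT hT k).2 ∧ (cellT hT k).2 ≤ e + t := by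
    rcases hsh with ⟨_, h1, h2⟩ | ⟨hh, _, _⟩
    · exact ⟨h1, h2⟩
    · omega
  by_cases hmin : ∀ j ∈ T (cellT hT k), k ≤ j
  · rw [if_pos hmin]
    have h := count_cols hT false (k-1) ((cellT hT k).2 - 1) ?_ ?_
    · rw [h, Nat.card_Icc]
      simp only [cond]
      omega
    · intro j h1 h2 hrowj hminj
      have hjI : j ∈ Finset.Icc 1 n := Finset.mem_Icc.mpr ⟨h1, h2⟩
      simp only [cond] at hrowj
      constructor
      · intro hjk
        rcases Nat.lt_trichotomy ((cellT hT j).2) ((cellT hT k).2) with hc | hc | hc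
        · omega
        · exfalso
          have hcc : cellT hT j = cellT hT k := Prod.ext (by omega) hc
          have h1 : j ≤ k := hminj k (hcc ▸ mem_cellT hT hkI)
          have h2 : k ≤ j := hmin j (hcc ▸ mem_cellT hT hjI)
          omega
        · exfalso
          have := cellT_lt hT hkI hjI (by omega) (by omega)
            (fun h => by have := congrArg Prod.snd h; omega)
          omega
      · intro hcj
        have := cellT_lt hT hjI hkI (by omega) (by omega)
          (fun h => by have := congrArg Prod.snd h; omega)
        omega
    · intro c hc1 hc2
      simp only [cond] at hc1
      exact Or.inl ⟨rfl, hc1, by omega⟩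
  · rw [if_neg hmin]
    have h := count_cols hT false (k-1) ((cellT hT k).2) ?_ ?_
    · rw [h, Nat.card_Icc]
      simp only [cond]
      omega
    · intro j h1 h2 hrowj hminj
      have hjI : j ∈ Finset.Icc 1 n := Finset.mem_Icc.mpr ⟨h1, h2⟩
      simp only [cond] at hrowj
      constructor
      · intro hjk
        by_contra hcj
        push_neg at hcj
        have := cellT_lt hT hkI hjI (by omega) (by omega)
          (fun h => by have := congrArg Prod.snd h; omega)
        omega
      · intro hcj
        by_cases hcc : cellT hT j = cellT hT k
        · have hjk : j ≤ k := hminj k (hcc ▸ mem_cellT hT hkI)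
          have hne : j ≠ k := by
            intro h
            subst h
            exact hmin (fun l hl => hminj l (by rw [← hcc] at hl; exact hl))
          omega
        · have := cellT_lt hT hjI hkI (by omega) hcj hcc
          omega
    · intro c hc1 hc2
      simp only [cond] at hc1
      exact Or.inl ⟨rfl, hc1, by omega⟩

lemma colB_pred_cont (hT : IsSVT n e t t T) {k : ℕ} (hkI : k ∈ Finset.Icc 1 n)
    (hrow : (cellT hT k).1 = 1) (hmin : ¬ ∀ j ∈ T (cellT hT k), k ≤ j) :
    cntNew true (wT hT) (k-1) = (cellT hT k).2 := by
  have hkI' := Finset.mem_Icc.mp hkI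
  have hsh := shape_cellT hT hkI
  have hcol : 1 ≤ (cellT hT k).2 ∧ (cellT hT k).2 ≤ e := by
    rcases hsh with ⟨hh, _, _⟩ | ⟨_, h1, h2⟩
    · omega
    · exact ⟨h1, h2⟩
  have h := count_cols hT true (k-1) ((cellT hT k).2) ?_ ?_
  · rw [h, Nat.card_Icc]
    simp only [cond]
    omega
  · intro j h1 h2 hrowj hminj
    have hjI : j ∈ Finset.Icc 1 n := Finset.mem_Icc.mpr ⟨h1, h2⟩
    simp only [cond] at hrowj
    constructor
    · intro hjk
      by_contra hcj
      push_neg at hcj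
      have := cellT_lt hT hkI hjI (by omega) (by omega)
        (fun h => by have := congrArg Prod.snd h; omega)
      omega
    · intro hcj
      by_cases hcc : cellT hT j = cellT hT k
      · have hjk : j ≤ k := hminj k (hcc ▸ mem_cellT hT hkI)
        have hne : j ≠ k := by
          intro h
          subst h
          exact hmin (fun l hl => hminj l (by rw [← hcc] at hl; exact hl))
        omega
      · have := cellT_lt hT hjI hkI (by omega) hcj hcc
        omega
  · intro c hc1 hc2
    simp only [cond] at hc1
    exact Or.inr ⟨rfl, hc1, by omega⟩

lemma betaA_le (hT : IsSVT n e t t T) {k : ℕ} (hkI : k ∈ Finset.Icc 1 n)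
    (hrow : (cellT hT k).1 = 0) :
    cntNew true (wT hT) (k-1) + 1 ≤ (cellT hT k).2 := by
  have hkI' := Finset.mem_Icc.mp hkI
  have hsh := shape_cellT hT hkI
  have hcol : t + 1 ≤ (cellT hT k).2 := by
    rcases hsh with ⟨_, h1, _⟩ | ⟨hh, _, _⟩
    · exact h1
    · omega
  have h := count_cols_le hT true (k-1) ((cellT hT k).2 - 1) 1 ?_
  · rw [Nat.card_Icc] at h
    omega
  · intro j h1 h2 hrowj hminj hjk
    have hjI : j ∈ Finset.Icc 1 n := Finset.mem_Icc.mpr ⟨h1, h2⟩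
    simp only [cond] at hrowj
    have hlo : 1 ≤ (cellT hT j).2 := by
      rcases shape_cellT hT hjI with ⟨hh, _, _⟩ | ⟨_, hl, _⟩
      · omega
      · exact hl
    refine ⟨hlo, ?_⟩
    by_contra hcj
    push_neg at hcj
    have := cellT_lt hT hkI hjI (by omega) (by omega)
      (fun h => by have := congrArg Prod.fst h; omega)
    omega

end Surj2

section Surj3
variable {n t e : ℕ} {T : ℕ × ℕ → Finset ℕ}

theorem ok_wT (hT : IsSVT n e t t T) : Ok t 0 0 (wT hT) := by
  constructor
  · rw [cnt_false_n hT, cnt_true_n hT]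
  · intro i
    have hkI : (i.val+1) ∈ Finset.Icc 1 n :=
      Finset.mem_Icc.mpr ⟨by omega, by have := i.isLt; omega⟩
    have hkI' := Finset.mem_Icc.mp hkI
    have hd := cellT_fst hT hkI
    by_cases hmin : ∀ j ∈ T (cellT hT (i.val+1)), i.val+1 ≤ j
    · rcases hd with h0 | h1
      · have hl : wT hT i = (false, true) :=
          (wT_eq_iff hT false i).mpr ⟨by rw [h0]; rfl, hmin⟩
        rw [hl]
        simp only [zero_add]
        simp [okc]
        have hA := colA_pred hT hkI h0
        rw [if_pos hmin] at hA
        have hB := betaA_le hT hkI h0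
        have hcol : t + 1 ≤ (cellT hT (i.val+1)).2 := by
          rcases shape_cellT hT hkI with ⟨_, hc, _⟩ | ⟨hh, _, _⟩
          · exact hc
          · omega
        simp only [Nat.add_sub_cancel] at hA hB
        omega
      · have hl : wT hT i = (true, true) :=
          (wT_eq_iff hT true i).mpr ⟨by rw [h1]; rfl, hmin⟩
        rw [hl]
        simp [okc]
    · rcases hd with h0 | h1
      · have hl : wT hT i = (false, false) := by
          refine Prod.ext ?_ ?_
          · show ((cellT hT (i.val+1)).1 == 1) = false
            rw [h0]
            rfl
          · show (@decide _ (Classical.propDecidable _)) = false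
            simp only [decide_eq_false_iff_not]
            exact hmin
        rw [hl]
        simp only [zero_add]
        simp [okc]
        have hA := colA_pred hT hkI h0
        rw [if_neg hmin] at hA
        have hB := betaA_le hT hkI h0
        have hcol : t + 1 ≤ (cellT hT (i.val+1)).2 := by
          rcases shape_cellT hT hkI with ⟨_, hc, _⟩ | ⟨hh, _, _⟩
          · exact hc
          · omega
        simp only [Nat.add_sub_cancel] at hA hB
        omega
      · have hl : wT hT i = (true, false) := by
          refine Prod.ext ?_ ?_
          · show ((cellT hT (i.val+1)).1 == 1) = true
            rw [h1]
            rfl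
          · show (@decide _ (Classical.propDecidable _)) = false
            simp only [decide_eq_false_iff_not]
            exact hmin
        rw [hl]
        simp only [zero_add]
        simp [okc]
        have hB := colB_pred_cont hT hkI h1 hmin
        have hcol : 1 ≤ (cellT hT (i.val+1)).2 := by
          rcases shape_cellT hT hkI with ⟨hh, _, _⟩ | ⟨_, hc, _⟩
          · omega
          · exact hc
        simp only [Nat.add_sub_cancel] at hB
        omega

lemma cellW_wT (hT : IsSVT n e t t T) {k : ℕ} (hkI : k ∈ Finset.Icc 1 n) :
    cellW n t (wT hT) k = cellT hT k := by
  have hkI' := Finset.mem_Icc.mp hkI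
  have hkn : k - 1 < n := by omega
  have hW : Wext (wT hT) (k-1) = wT hT ⟨k-1, hkn⟩ := Wext_lt _ hkn
  have hval : (⟨k-1, hkn⟩ : Fin n).val + 1 = k := by simp only; omega
  have hd := cellT_fst hT hkI
  unfold cellW
  rw [hW]
  rcases hd with h0 | h1
  · have hfst : (wT hT ⟨k-1,hkn⟩).1 = false := by
      show ((cellT hT ((⟨k-1,hkn⟩ : Fin n).val + 1)).1 == 1) = false
      rw [hval, h0]
      rfl
    rw [if_pos hfst]
    have hA := colA hT hkI h0
    rw [show (⟨k-1,hkn⟩ : Fin n).val + 1 = k from hval] at *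
    have hcol : t+1 ≤ (cellT hT k).2 := by
      rcases shape_cellT hT hkI with ⟨_, hc, _⟩ | ⟨hh, _, _⟩
      · exact hc
      · omega
    refine Prod.ext h0.symm ?_
    simp only
    omega
  · have hfst : ¬ (wT hT ⟨k-1,hkn⟩).1 = false := by
      show ¬ ((cellT hT ((⟨k-1,hkn⟩ : Fin n).val + 1)).1 == 1) = false
      rw [hval, h1]
      simp
    rw [if_neg hfst]
    have hB := colB hT hkI h1
    exact Prod.ext h1.symm (by simp only; omega)

theorem TW_wT (hT : IsSVT n e t t T) : TW n t (wT hT) = T := by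
  funext p
  ext k
  rw [mem_TW_iff]
  by_cases hkI : k ∈ Finset.Icc 1 n
  · rw [cellW_wT hT hkI]
    constructor
    · rintro ⟨_, rfl⟩
      exact mem_cellT hT hkI
    · intro hk
      exact ⟨hkI, cellT_unique hT hkI hk⟩
  · constructor
    · rintro ⟨h, _⟩
      exact absurd h hkI
    · intro hk
      exact absurd (hT.2.2.1 p k hk) hkI

end Surj3

theorem card_tableaux (n t : ℕ) :
    Nat.card {p : ℕ × (ℕ × ℕ → Finset ℕ) // IsSVT n p.1 t t p.2} = cnt t n 0 0 := by
  have hb : Function.Bijective (fun w : {w : Fin n → Ltr // Ok t 0 0 w} =>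
      (⟨(cntNew false w.1 n, TW n t w.1), isSVT_TW w.2⟩ :
        {p : ℕ × (ℕ × ℕ → Finset ℕ) // IsSVT n p.1 t t p.2})) := by
    constructor
    · rintro ⟨w, hw⟩ ⟨w', hw'⟩ h
      simp only [Subtype.mk.injEq, Prod.mk.injEq] at h
      exact Subtype.ext (TW_inj hw hw' h.2)
    · rintro ⟨⟨e, T⟩, hT⟩
      refine ⟨⟨wT hT, ok_wT hT⟩, ?_⟩
      apply Subtype.ext
      exact Prod.ext (cnt_false_n hT) (TW_wT hT)
  rw [← Nat.card_eq_of_bijective _ hb, Nat.card_eq_fintype_card, card_ok]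


/-- The number of set-valued standard tableaux of skew shape `(e+t,e)/(t,0)`, for some
non-negative integer `e`, with a total of `n` entries, equals
`2·C(2n-3,n-2) − C(2n-2,n-2t-2)`. -/
theorem count_svt_skew_tf (n t : ℕ) (hn : 1 ≤ n) (ht : 1 ≤ t) :
    (Nat.card {p : ℕ × (ℕ × ℕ → Finset ℕ) // IsSVT n p.1 t t p.2} : ℤ) =
      2 * zchoose (2 * (n : ℤ) - 3) ((n : ℤ) - 2)
        - zchoose (2 * (n : ℤ) - 2) ((n : ℤ) - 2 * t - 2) := by
  rw [card_tableaux n t]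
  obtain ⟨m, rfl⟩ : ∃ m, n = m + 1 := ⟨n - 1, by omega⟩
  have hstep : cnt t (m+1) 0 0 = cnt t m 1 0 + cnt t m 0 1 := by
    simp only [cnt]
    rw [if_pos (by omega : (0:ℕ) ≤ 0 + t), if_neg (by simp : ¬ (1 ≤ 0 ∧ 0 + 1 ≤ 0 + t)),
      if_neg (by omega : ¬ (1:ℕ) ≤ 0)]
    norm_num
  rw [hstep]
  rcases Nat.eq_zero_or_pos m with hm | hm
  · subst hm
    have c1 : cnt t 0 1 0 = 0 := by simp only [cnt]; rw [if_neg (by omega)]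
    have c2 : cnt t 0 0 1 = 0 := by simp only [cnt]; rw [if_neg (by omega)]
    rw [c1, c2]
    have ht' : (1:ℤ) ≤ (t:ℤ) := by exact_mod_cast ht
    have z1 : zchoose (2*((0+1:ℕ):ℤ) - 3) (((0+1:ℕ):ℤ) - 2) = 0 :=
      zchoose_neg (by norm_num)
    have z2 : zchoose (2*((0+1:ℕ):ℤ) - 2) (((0+1:ℕ):ℤ) - 2*(t:ℤ) - 2) = 0 :=
      zchoose_neg (by push_cast; omega)
    push_cast at z1 z2 ⊢
    rw [z1, z2]
    ring
  · have e1 := (cnt_closed t ht m 1 0).2.1 (le_refl 1)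
    have e2 := (cnt_closed t ht m 0 1).2.2 (le_refl 1)
    rw [if_pos (by omega : 1 ≤ t + 1)] at e2
    push_cast
    rw [e1, e2]
    simp only [phiH, phiK]
    have h2m : (0:ℤ) ≤ 2*(m:ℤ) - 1 := by
      have : (1:ℤ) ≤ (m:ℤ) := by exact_mod_cast hm
      omega
    have P := zchoose_pascal (2*(m:ℤ)-1) ((m:ℤ)-2*(t:ℤ)-1) h2m
    rw [show (2*(m:ℤ)-1)+1 = 2*(m:ℤ) by ring] at P
    push_cast
    ring_nf at P ⊢
    linarith [P]
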